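/- If S is an edge metric basis of a connected graph G with |S| = k, then every vertex of S has degree at most 2^{k−1}. -/

import Mathlib

open SimpleGraph

/-- Distance from a vertex `v` to an edge `e = uw`: `min (d v u) (d v w)`. -/
noncomputable def edgeDist {V : Type*} (G : SimpleGraph V) (v : V) (e : Sym2 V) : ℕ :=
  Sym2.lift ⟨fun u w => min (G.dist v u) (G.dist v w), fun u w => by simp [min_comm]⟩ e

/-- `S` is an edge metric generator: every two distinct edges are distinguished
by some vertex of `S`. -/
def IsEdgeMetricGenerator {V : Type*} (G : SimpleGraph V) (S : Set V) : Prop :=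
  ∀ e₁ ∈ G.edgeSet, ∀ e₂ ∈ G.edgeSet, e₁ ≠ e₂ →
    ∃ v ∈ S, edgeDist G v e₁ ≠ edgeDist G v e₂

/-- The edge metric dimension: minimum cardinality of an edge metric generator. -/
noncomputable def edim {V : Type*} (G : SimpleGraph V) : ℕ :=
  sInf {k | ∃ S : Finset V, S.card = k ∧ IsEdgeMetricGenerator G ↑S}

theorem degree_le_of_mem_basis {V : Type*} [Fintype V] (G : SimpleGraph V)
    [DecidableRel G.Adj] (hG : G.Connected) (S : Finset V) (k : ℕ)
    (hgen : IsEdgeMetricGenerator G ↑S) (hbasis : S.card = edim G) (hk : S.card = k) :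
    ∀ v ∈ S, G.degree v ≤ 2 ^ (k - 1) := by
  classical
  subst hk
  intro v hv
  set f : V → (↥(S.erase v : Finset V) → Bool) :=
    fun w u => decide (edgeDist G (u : V) (s(v, w)) = G.dist (u : V) v) with hf
  have hinj : Set.InjOn f (G.neighborFinset v : Set V) := by
    intro w1 h1 w2 h2 hfeq
    simp only [Finset.coe_sort_coe, Finset.mem_coe, SimpleGraph.mem_neighborFinset] at h1 h2
    by_contra hne
    have hedge : (s(v, w1) : Sym2 V) ≠ s(v, w2) := by
      intro h
      rcases Sym2.eq_iff.mp h with ⟨_, h'⟩ | ⟨h', _⟩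
      · exact hne h'
      · exact G.ne_of_adj h2 h'
    obtain ⟨u, hu, hd⟩ := hgen _ (by simpa using h1) _ (by simpa using h2) hedge
    by_cases huv : u = v
    · subst huv
      exact hd (by simp [edgeDist, SimpleGraph.dist_self])
    · have hu' : u ∈ S.erase v := Finset.mem_erase.mpr ⟨huv, hu⟩
      have hbb := congrFun hfeq ⟨u, hu'⟩
      simp only [hf, decide_eq_decide] at hbb
      have e1 : edgeDist G u (s(v, w1)) = min (G.dist u v) (G.dist u w1) := rfl
      have e2 : edgeDist G u (s(v, w2)) = min (G.dist u v) (G.dist u w2) := rfl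
      have t1 : G.dist u v ≤ G.dist u w1 + 1 := by
        have := hG.dist_triangle (u := u) (v := w1) (w := v)
        rwa [(dist_eq_one_iff_adj.mpr h1.symm : G.dist w1 v = 1)] at this
      have t2 : G.dist u v ≤ G.dist u w2 + 1 := by
        have := hG.dist_triangle (u := u) (v := w2) (w := v)
        rwa [(dist_eq_one_iff_adj.mpr h2.symm : G.dist w2 v = 1)] at this
      rw [e1, e2] at hd hbb
      omega
  have := Finset.card_le_card_of_injOn f (fun w _ => Finset.mem_univ (f w)) hinj
  calc G.degree v = (G.neighborFinset v).card := rfl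
    _ ≤ (Finset.univ : Finset (↥(S.erase v : Finset V) → Bool)).card := this
    _ = 2 ^ (S.card - 1) := by
        rw [Finset.card_univ, Fintype.card_fun, Fintype.card_bool,
          Fintype.card_coe, Finset.card_erase_of_mem hv]
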